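/- Let F : R^d -> R be L-smooth, mu > 0, and let z_1, ..., z_k be i.i.d. uniform on the unit sphere S^d. Define g(w, z) = d * (F(w + mu*z) - F(w - mu*z))/(2*mu) * z. Then E[ || (1/k) * sum_{r=1}^k g(w, z_r) ||_2^2 ] <= ((k-1)*(1 + sqrt(d)) + 2d)/k * ||grad F(w)||_2^2 + 2 * L^2 * mu^2 * d^2. -/

import Mathlib

open MeasureTheory

abbrev Euc (d : ℕ) := EuclideanSpace ℝ (Fin d)

/-- The uniform (rotation-invariant) probability measure on the unit sphere in `ℝ^d`. -/
noncomputable def uniformSphere (d : ℕ) :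
    Measure (Metric.sphere (0 : Euc d) 1) :=
  ((volume : Measure (Euc d)).toSphere Set.univ)⁻¹ • (volume : Measure (Euc d)).toSphere

instance uniformSphere_finite (d : ℕ) : IsFiniteMeasure (uniformSphere d) := by
  constructor
  rw [uniformSphere, Measure.smul_apply, smul_eq_mul]
  exact lt_of_le_of_lt (ENNReal.inv_mul_le_one _) ENNReal.one_lt_top

open Metric Set
open scoped ENNReal Pointwise RealInnerProductSpace

variable {d : ℕ}

/-- map induced on unit sphere by a linear isometry equiv -/
noncomputable def sphereMap (e : Euc d ≃ₗᵢ[ℝ] Euc d) (z : Metric.sphere (0 : Euc d) 1) :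
    Metric.sphere (0 : Euc d) 1 :=
  ⟨e z, by
    have := z.2
    simp only [mem_sphere_iff_norm, sub_zero] at this ⊢
    simp [this]⟩

lemma sphereMap_continuous (e : Euc d ≃ₗᵢ[ℝ] Euc d) : Continuous (sphereMap e) :=
  Continuous.subtype_mk (e.continuous.comp continuous_subtype_val) _

lemma coe_preimage_sphereMap (e : Euc d ≃ₗᵢ[ℝ] Euc d) (s : Set (Metric.sphere (0 : Euc d) 1)) :
    (Subtype.val '' (sphereMap e ⁻¹' s)) = e ⁻¹' (Subtype.val '' s) := by
  ext x
  constructor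
  · rintro ⟨z, hz, rfl⟩
    exact ⟨sphereMap e z, hz, rfl⟩
  · rintro ⟨z, hz, hez⟩
    have hx : x ∈ Metric.sphere (0 : Euc d) 1 := by
      have hz2 := z.2
      simp only [mem_sphere_iff_norm, sub_zero] at hz2 ⊢
      rw [← e.norm_map x, ← hez]; exact hz2
    refine ⟨⟨x, hx⟩, ?_, rfl⟩
    show sphereMap e ⟨x, hx⟩ ∈ s
    have : sphereMap e ⟨x, hx⟩ = z := Subtype.ext hez.symm
    rw [this]; exact hz

lemma smul_preimage_isometry (e : Euc d ≃ₗᵢ[ℝ] Euc d) (B : Set (Euc d)) :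
    (Ioo (0:ℝ) 1) • (e ⁻¹' B) = e ⁻¹' ((Ioo (0:ℝ) 1) • B) := by
  ext x
  simp only [Set.mem_smul, Set.mem_preimage]
  constructor
  · rintro ⟨c, hc, y, hy, rfl⟩
    exact ⟨c, hc, e y, hy, (_root_.map_smul e c y).symm⟩
  · rintro ⟨c, hc, b, hb, hcb⟩
    refine ⟨c, hc, e.symm b, by simpa using hb, ?_⟩
    apply e.injective
    rw [_root_.map_smul]
    simp [hcb]

lemma toSphere_map (e : Euc d ≃ₗᵢ[ℝ] Euc d) :
    ((volume : Measure (Euc d)).toSphere).map (sphereMap e) = (volume : Measure (Euc d)).toSphere := by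
  ext s hs
  rw [Measure.map_apply (sphereMap_continuous e).measurable hs,
    Measure.toSphere_apply' _ (hs.preimage (sphereMap_continuous e).measurable),
    Measure.toSphere_apply' _ hs, coe_preimage_sphereMap, smul_preimage_isometry]
  congr 1
  exact (e.measurePreserving).measure_preimage_emb (e.toHomeomorph.measurableEmbedding) _

lemma uniformSphere_map (e : Euc d ≃ₗᵢ[ℝ] Euc d) :
    (uniformSphere d).map (sphereMap e) = uniformSphere d := by
  rw [uniformSphere, Measure.map_smul, toSphere_map]

lemma integral_sphereMap {E : Type*} [NormedAddCommGroup E] [NormedSpace ℝ E]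
    (e : Euc d ≃ₗᵢ[ℝ] Euc d) (f : Metric.sphere (0 : Euc d) 1 → E) (hf : Continuous f) :
    ∫ z, f (sphereMap e z) ∂(uniformSphere d) = ∫ z, f z ∂(uniformSphere d) := by
  conv_rhs => rw [← uniformSphere_map e]
  rw [integral_map (sphereMap_continuous e).aemeasurable hf.aestronglyMeasurable]


variable (d : ℕ)

lemma uniformSphere_prob (hd : 0 < d) : IsProbabilityMeasure (uniformSphere d) := by
  constructor
  rw [uniformSphere, Measure.smul_apply, smul_eq_mul]
  have h : (volume : Measure (Euc d)).toSphere univ = (d : ℝ≥0∞) * volume (ball (0:Euc d) 1) := by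
    rw [Measure.toSphere_apply_univ, finrank_euclideanSpace_fin]
  rw [h, ENNReal.inv_mul_cancel]
  · have h1 : volume (ball (0:Euc d) 1) ≠ 0 := (measure_ball_pos _ _ one_pos).ne'
    exact mul_ne_zero (by exact_mod_cast hd.ne') h1
  · exact ENNReal.mul_ne_top (ENNReal.natCast_ne_top d) measure_ball_lt_top.ne


variable {d}

lemma cont_integrable {E : Type*} [NormedAddCommGroup E]
    (f : Metric.sphere (0 : Euc d) 1 → E) (hf : Continuous f) :
    Integrable f (uniformSphere d) := by
  have := hf.continuousOn.integrableOn_compact (μ := uniformSphere d) isCompact_univ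
  rwa [integrableOn_univ] at this

lemma cont_coord (i : Fin d) :
    Continuous (fun z : Metric.sphere (0 : Euc d) 1 => (z : Euc d) i) :=
  ((EuclideanSpace.proj (𝕜 := ℝ) i).continuous).comp continuous_subtype_val

/-- second moment matrix entries -/
noncomputable def sphI (d : ℕ) (i j : Fin d) : ℝ :=
  ∫ z : Metric.sphere (0 : Euc d) 1, (z : Euc d) i * (z : Euc d) j ∂(uniformSphere d)

noncomputable def flipIso (j : Fin d) : Euc d ≃ₗᵢ[ℝ] Euc d :=
  LinearIsometryEquiv.piLpCongrRight 2
    (fun i => if i = j then LinearIsometryEquiv.neg ℝ else LinearIsometryEquiv.refl ℝ ℝ)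

lemma flipIso_apply (j : Fin d) (v : Euc d) (i : Fin d) :
    flipIso j v i = if i = j then -(v i) else v i := by
  rw [flipIso, LinearIsometryEquiv.piLpCongrRight_apply]
  by_cases h : i = j
  · subst h; simp
  · simp [h]

noncomputable def swapIso (i j : Fin d) : Euc d ≃ₗᵢ[ℝ] Euc d :=
  LinearIsometryEquiv.piLpCongrLeft 2 ℝ ℝ (Equiv.swap i j)

lemma swapIso_apply (i j : Fin d) (v : Euc d) (m : Fin d) :
    swapIso i j v m = v (Equiv.swap i j m) := by
  rw [swapIso, LinearIsometryEquiv.piLpCongrLeft_apply]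
  rfl

lemma sphI_offdiag {i j : Fin d} (hij : i ≠ j) : sphI d i j = 0 := by
  have key := integral_sphereMap (flipIso j)
    (fun z : Metric.sphere (0 : Euc d) 1 => (z : Euc d) i * (z : Euc d) j)
    (((cont_coord i)).mul (cont_coord j))
  have h1 : ∀ z : Metric.sphere (0 : Euc d) 1,
      ((sphereMap (flipIso j) z : Euc d) i) * ((sphereMap (flipIso j) z : Euc d) j)
        = -((z : Euc d) i * (z : Euc d) j) := by
    intro z
    show (flipIso j (z : Euc d)) i * (flipIso j (z : Euc d)) j = _
    rw [flipIso_apply, flipIso_apply, if_neg hij, if_pos rfl]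
    ring
  rw [show (fun z : Metric.sphere (0 : Euc d) 1 =>
      ((sphereMap (flipIso j) z : Euc d) i) * ((sphereMap (flipIso j) z : Euc d) j))
      = fun z : Metric.sphere (0 : Euc d) 1 => -((z : Euc d) i * (z : Euc d) j) from funext h1] at key
  rw [integral_neg] at key
  have h2 : -(sphI d i j) = sphI d i j := key
  linarith

lemma sphI_diag_eq (i j : Fin d) : sphI d i i = sphI d j j := by
  have key := integral_sphereMap (swapIso i j)
    (fun z : Metric.sphere (0 : Euc d) 1 => (z : Euc d) i * (z : Euc d) i)
    (((cont_coord i)).mul (cont_coord i))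
  have h1 : ∀ z : Metric.sphere (0 : Euc d) 1,
      ((sphereMap (swapIso i j) z : Euc d) i) * ((sphereMap (swapIso i j) z : Euc d) i)
        = (z : Euc d) j * (z : Euc d) j := by
    intro z
    show (swapIso i j (z : Euc d)) i * (swapIso i j (z : Euc d)) i = _
    rw [swapIso_apply, Equiv.swap_apply_left]
  rw [show (fun z : Metric.sphere (0 : Euc d) 1 =>
      ((sphereMap (swapIso i j) z : Euc d) i) * ((sphereMap (swapIso i j) z : Euc d) i))
      = fun z : Metric.sphere (0 : Euc d) 1 => (z : Euc d) j * (z : Euc d) j from funext h1] at key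
  rw [sphI, sphI, ← key]

lemma sphI_diag (hd : 0 < d) (i : Fin d) : sphI d i i = 1 / d := by
  haveI := uniformSphere_prob d hd
  have hsum : ∑ j : Fin d, sphI d j j = 1 := by
    simp only [sphI]
    rw [← integral_finset_sum _ (fun j _ => cont_integrable (fun z : Metric.sphere (0 : Euc d) 1 => (z : Euc d) j * (z : Euc d) j) ((cont_coord j).mul (cont_coord j)))]
    have : ∀ z : Metric.sphere (0 : Euc d) 1,
        ∑ j : Fin d, (z : Euc d) j * (z : Euc d) j = 1 := by
      intro z
      have hz : ‖(z : Euc d)‖ = 1 := by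
        have := z.2; simpa [mem_sphere_iff_norm] using this
      have hn := EuclideanSpace.norm_eq (z : Euc d)
      rw [hz] at hn
      have h2 : ∑ j : Fin d, (z : Euc d) j ^ 2 = 1 := by
        have := congrArg (fun t : ℝ => t ^ 2) hn
        simp only [one_pow] at this
        rw [Real.sq_sqrt (by positivity)] at this
        simp only [Real.norm_eq_abs, sq_abs] at this
        linarith
      calc ∑ j : Fin d, (z : Euc d) j * (z : Euc d) j
          = ∑ j : Fin d, (z : Euc d) j ^ 2 := by simp [sq]
        _ = 1 := h2
    rw [show (fun z : Metric.sphere (0 : Euc d) 1 =>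
        ∑ j : Fin d, (z : Euc d) j * (z : Euc d) j) = fun _ => (1:ℝ) from funext this]
    simp
  have hall : ∀ j : Fin d, sphI d j j = sphI d i i := fun j => sphI_diag_eq j i
  rw [Finset.sum_congr rfl (fun j _ => hall j), Finset.sum_const] at hsum
  simp only [Finset.card_univ, Fintype.card_fin, nsmul_eq_mul] at hsum
  field_simp
  linarith


variable {d : ℕ}

lemma inner_euc (v z : Euc d) : ⟪v, z⟫ = ∑ i : Fin d, v i * z i := by
  simp [PiLp.inner_apply, RCLike.inner_apply, conj_trivial]
  exact Finset.sum_congr rfl fun _ _ => mul_comm _ _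

lemma norm_sq_euc (v : Euc d) : ‖v‖ ^ 2 = ∑ i : Fin d, v i ^ 2 := by
  have hn := EuclideanSpace.norm_eq v
  rw [hn, Real.sq_sqrt (by positivity)]
  simp [Real.norm_eq_abs, sq_abs]

lemma cont_inner (v : Euc d) :
    Continuous (fun z : Metric.sphere (0 : Euc d) 1 => ⟪v, (z : Euc d)⟫) := by
  exact (continuous_const.inner continuous_subtype_val)

lemma integral_inner_sq (hd : 0 < d) (v : Euc d) :
    ∫ z : Metric.sphere (0 : Euc d) 1, ⟪v, (z : Euc d)⟫ ^ 2 ∂(uniformSphere d)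
      = ‖v‖ ^ 2 / d := by
  have hsq : ∀ z : Metric.sphere (0 : Euc d) 1, ⟪v, (z : Euc d)⟫ ^ 2
      = ∑ i : Fin d, ∑ j : Fin d, (v i * v j) * ((z : Euc d) i * (z : Euc d) j) := by
    intro z
    rw [inner_euc, sq, Finset.sum_mul_sum]
    apply Finset.sum_congr rfl; intro i _
    apply Finset.sum_congr rfl; intro j _
    ring
  rw [show (fun z : Metric.sphere (0 : Euc d) 1 => ⟪v, (z : Euc d)⟫ ^ 2)
      = fun z : Metric.sphere (0 : Euc d) 1 =>
        ∑ i : Fin d, ∑ j : Fin d, (v i * v j) * ((z : Euc d) i * (z : Euc d) j)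
      from funext hsq]
  rw [integral_finset_sum _ (fun i _ => by
    apply cont_integrable
    exact continuous_finset_sum _ (fun j _ =>
      continuous_const.mul ((cont_coord i).mul (cont_coord j))))]
  have : ∀ i : Fin d, ∫ z : Metric.sphere (0 : Euc d) 1,
      (∑ j : Fin d, (v i * v j) * ((z : Euc d) i * (z : Euc d) j)) ∂(uniformSphere d)
      = v i ^ 2 / d := by
    intro i
    rw [integral_finset_sum _ (fun j _ =>
      cont_integrable (fun z : Metric.sphere (0 : Euc d) 1 => (v i * v j) * ((z : Euc d) i * (z : Euc d) j)) (continuous_const.mul ((cont_coord i).mul (cont_coord j))))]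
    have h1 : ∀ j : Fin d, ∫ z : Metric.sphere (0 : Euc d) 1,
        (v i * v j) * ((z : Euc d) i * (z : Euc d) j) ∂(uniformSphere d)
        = (v i * v j) * sphI d i j := fun j => by
      rw [MeasureTheory.integral_const_mul]; rfl
    rw [Finset.sum_congr rfl (fun j _ => h1 j)]
    rw [Finset.sum_eq_single i]
    · rw [sphI_diag hd]; field_simp
    · intro j _ hji
      rw [sphI_offdiag (Ne.symm hji), mul_zero]
    · intro h; exact absurd (Finset.mem_univ i) h
  rw [Finset.sum_congr rfl (fun i _ => this i), ← Finset.sum_div, ← norm_sq_euc]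

lemma integral_inner_smul (hd : 0 < d) (v : Euc d) :
    ∫ z : Metric.sphere (0 : Euc d) 1, ⟪v, (z : Euc d)⟫ • (z : Euc d) ∂(uniformSphere d)
      = (d : ℝ)⁻¹ • v := by
  have hint : Integrable (fun z : Metric.sphere (0 : Euc d) 1 => ⟪v, (z : Euc d)⟫ • (z : Euc d))
      (uniformSphere d) :=
    cont_integrable _ ((cont_inner v).smul continuous_subtype_val)
  apply PiLp.ext
  intro i
  have hproj := (EuclideanSpace.proj (𝕜 := ℝ) i).integral_comp_comm hint
  have h0 : (EuclideanSpace.proj (𝕜 := ℝ) i)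
      (∫ z : Metric.sphere (0 : Euc d) 1, ⟪v, (z : Euc d)⟫ • (z : Euc d) ∂(uniformSphere d))
      = (∫ z : Metric.sphere (0 : Euc d) 1, ⟪v, (z : Euc d)⟫ • (z : Euc d) ∂(uniformSphere d)) i := rfl
  rw [h0] at hproj
  have h1 : ∀ z : Metric.sphere (0 : Euc d) 1,
      (EuclideanSpace.proj (𝕜 := ℝ) i) (⟪v, (z : Euc d)⟫ • (z : Euc d))
      = ∑ j : Fin d, (v j * (z : Euc d) j) * (z : Euc d) i := by
    intro z
    have : (EuclideanSpace.proj (𝕜 := ℝ) i) (⟪v, (z : Euc d)⟫ • (z : Euc d))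
        = ⟪v, (z : Euc d)⟫ * (z : Euc d) i := rfl
    rw [this, inner_euc, Finset.sum_mul]
  rw [show (fun z : Metric.sphere (0 : Euc d) 1 =>
        (EuclideanSpace.proj (𝕜 := ℝ) i) (⟪v, (z : Euc d)⟫ • (z : Euc d)))
      = fun z : Metric.sphere (0 : Euc d) 1 =>
        ∑ j : Fin d, (v j * (z : Euc d) j) * (z : Euc d) i from funext h1] at hproj
  rw [integral_finset_sum _ (fun j _ =>
    cont_integrable (fun z : Metric.sphere (0 : Euc d) 1 => (v j * (z : Euc d) j) * (z : Euc d) i) ((continuous_const.mul (cont_coord j)).mul (cont_coord i)))] at hproj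
  have h2 : ∀ j : Fin d, ∫ z : Metric.sphere (0 : Euc d) 1,
      (v j * (z : Euc d) j) * (z : Euc d) i ∂(uniformSphere d) = v j * sphI d j i := by
    intro j
    have : (fun z : Metric.sphere (0 : Euc d) 1 => (v j * (z : Euc d) j) * (z : Euc d) i)
        = fun z : Metric.sphere (0 : Euc d) 1 => v j * ((z : Euc d) j * (z : Euc d) i) := by
      funext z; ring
    rw [this, MeasureTheory.integral_const_mul]; rfl
  rw [Finset.sum_congr rfl (fun j _ => h2 j), Finset.sum_eq_single i] at hproj
  · rw [← hproj, sphI_diag hd]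
    show _ = (d:ℝ)⁻¹ * v i
    field_simp
  · intro j _ hji
    rw [sphI_offdiag hji, mul_zero]
  · intro h; exact absurd (Finset.mem_univ i) h


lemma taylor_bound {d : ℕ} {F : Euc d → ℝ} {L : ℝ} (hL : 0 ≤ L)
    (hF : Differentiable ℝ F)
    (hsmooth : ∀ x y : Euc d, ‖gradient F x - gradient F y‖ ≤ L * ‖x - y‖)
    (x v : Euc d) : |F (x + v) - F x - ⟪gradient F x, v⟫| ≤ L * ‖v‖ ^ 2 := by
  have hgrad_fderiv : ∀ z : Euc d,
      fderiv ℝ F z = InnerProductSpace.toDual ℝ (Euc d) (gradient F z) := by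
    intro z
    rw [gradient, LinearIsometryEquiv.apply_symm_apply]
  have key := Convex.norm_image_sub_le_of_norm_fderiv_le'
    (f := F) (φ := fderiv ℝ F x) (s := closedBall x ‖v‖) (C := L * ‖v‖)
    (x := x) (y := x + v)
    (fun z _ => hF z)
    (fun z hz => by
      have h1 : ‖fderiv ℝ F z - fderiv ℝ F x‖ = ‖gradient F z - gradient F x‖ := by
        rw [hgrad_fderiv, hgrad_fderiv, ← map_sub, LinearIsometryEquiv.norm_map]
      rw [h1]
      calc ‖gradient F z - gradient F x‖ ≤ L * ‖z - x‖ := hsmooth z x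
        _ ≤ L * ‖v‖ := by
            apply mul_le_mul_of_nonneg_left _ hL
            rw [← dist_eq_norm]
            exact mem_closedBall.mp hz)
    (convex_closedBall x ‖v‖)
    (mem_closedBall_self (norm_nonneg v))
    (by simp [mem_closedBall, dist_eq_norm])
  simp only [add_sub_cancel_left] at key
  have hφ : fderiv ℝ F x v = ⟪gradient F x, v⟫ := by
    rw [hgrad_fderiv]
    exact InnerProductSpace.toDual_apply_apply
  rw [hφ] at key
  calc |F (x + v) - F x - ⟪gradient F x, v⟫| ≤ L * ‖v‖ * ‖v‖ := key
    _ = L * ‖v‖ ^ 2 := by ring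

section single
variable {d : ℕ} {F : Euc d → ℝ} {L μ : ℝ} {w : Euc d}

/-- the scalar factor of the zero-order gradient estimate -/
noncomputable def aFun (d : ℕ) (F : Euc d → ℝ) (μ : ℝ) (w z : Euc d) : ℝ :=
  (d : ℝ) * (F (w + μ • z) - F (w - μ • z)) / (2 * μ)

lemma aFun_bound (hμ : 0 < μ) (hL : 0 ≤ L) (hF : Differentiable ℝ F)
    (hsmooth : ∀ x y : Euc d, ‖gradient F x - gradient F y‖ ≤ L * ‖x - y‖)
    (z : Euc d) (hz : ‖z‖ = 1) :
    |aFun d F μ w z - (d : ℝ) * ⟪gradient F w, z⟫| ≤ L * d * μ := by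
  set G := gradient F w with hG
  have hnorm : ‖μ • z‖ ^ 2 = μ ^ 2 := by
    rw [norm_smul, hz, Real.norm_eq_abs, mul_one, sq_abs]
  have t1 := taylor_bound hL hF hsmooth w (μ • z)
  have t2 := taylor_bound hL hF hsmooth w (-(μ • z))
  rw [hnorm] at t1
  rw [norm_neg, hnorm] at t2
  have hws : w + -(μ • z) = w - μ • z := by abel
  rw [hws, inner_neg_right] at t2
  have hsm : ⟪G, μ • z⟫ = μ * ⟪G, z⟫ := real_inner_smul_right G z μ
  rw [hsm] at t1 t2
  set A := F (w + μ • z) - F (w - μ • z) with hA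
  set c := ⟪G, z⟫ with hc
  have habs : |A - 2 * μ * c| ≤ 2 * (L * μ ^ 2) := by
    have : A - 2 * μ * c = (F (w + μ • z) - F w - μ * c) - (F (w - μ • z) - F w - -(μ * c)) := by
      rw [hA]; ring
    rw [this]
    calc |(F (w + μ • z) - F w - μ * c) - (F (w - μ • z) - F w - -(μ * c))|
        ≤ |F (w + μ • z) - F w - μ * c| + |F (w - μ • z) - F w - -(μ * c)| := abs_sub _ _
      _ ≤ L * μ ^ 2 + L * μ ^ 2 := add_le_add t1 t2
      _ = 2 * (L * μ ^ 2) := by ring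
  have heq : aFun d F μ w z - (d : ℝ) * c = ((d : ℝ) / (2 * μ)) * (A - 2 * μ * c) := by
    rw [aFun]
    field_simp
    ring
  rw [heq, abs_mul, abs_div]
  have h2μ : |2 * μ| = 2 * μ := abs_of_pos (by linarith)
  have hd2 : |(d : ℝ)| = (d : ℝ) := abs_of_nonneg (Nat.cast_nonneg d)
  rw [h2μ, hd2]
  calc (d : ℝ) / (2 * μ) * |A - 2 * μ * c| ≤ (d : ℝ) / (2 * μ) * (2 * (L * μ ^ 2)) := by
        apply mul_le_mul_of_nonneg_left habs
        positivity
    _ = L * d * μ := by field_simp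

/-- the vector-valued zero-order gradient estimate, on the sphere -/
noncomputable def gFun (d : ℕ) (F : Euc d → ℝ) (μ : ℝ) (w : Euc d)
    (z : Metric.sphere (0 : Euc d) 1) : Euc d :=
  aFun d F μ w (z : Euc d) • (z : Euc d)

lemma gFun_cont (hF : Continuous F) : Continuous (gFun d F μ w) := by
  refine Continuous.smul (f := fun z : Metric.sphere (0 : Euc d) 1 => aFun d F μ w (z : Euc d)) ?_ continuous_subtype_val
  apply Continuous.div_const
  apply Continuous.mul continuous_const
  exact (hF.comp (continuous_const.add ((continuous_const : Continuous fun _ : Metric.sphere (0 : Euc d) 1 => μ).smul continuous_subtype_val))).sub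
    (hF.comp (continuous_const.sub ((continuous_const : Continuous fun _ : Metric.sphere (0 : Euc d) 1 => μ).smul continuous_subtype_val)))

lemma coe_sphere_norm (z : Metric.sphere (0 : Euc d) 1) : ‖(z : Euc d)‖ = 1 := by
  have := z.2; simpa [mem_sphere_iff_norm] using this

lemma diag_bound (hd : 0 < d) (hμ : 0 < μ) (hL : 0 ≤ L) (hF : Differentiable ℝ F)
    (hsmooth : ∀ x y : Euc d, ‖gradient F x - gradient F y‖ ≤ L * ‖x - y‖) :
    ∫ z, ‖gFun d F μ w z‖ ^ 2 ∂(uniformSphere d)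
      ≤ 2 * d * ‖gradient F w‖ ^ 2 + 2 * L ^ 2 * d ^ 2 * μ ^ 2 := by
  haveI := uniformSphere_prob d hd
  set G := gradient F w with hG
  have hptwise : ∀ z : Metric.sphere (0 : Euc d) 1,
      ‖gFun d F μ w z‖ ^ 2 ≤ 2 * (d : ℝ) ^ 2 * ⟪G, (z : Euc d)⟫ ^ 2 + 2 * (L * d * μ) ^ 2 := by
    intro z
    have h1 : ‖gFun d F μ w z‖ = |aFun d F μ w (z : Euc d)| := by
      rw [gFun, norm_smul, coe_sphere_norm, Real.norm_eq_abs, mul_one]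
    rw [h1, sq_abs]
    have hb := aFun_bound (w := w) hμ hL hF hsmooth (z : Euc d) (coe_sphere_norm z)
    set a := aFun d F μ w (z : Euc d)
    set c := ⟪G, (z : Euc d)⟫
    have h2 := abs_le.mp hb
    have he2 : (a - (d:ℝ)*c)^2 ≤ (L*(d:ℝ)*μ)^2 := sq_le_sq' h2.1 h2.2
    nlinarith [sq_nonneg (2*(d:ℝ)*c - a), he2]
  have hint1 : Integrable (fun z => ‖gFun d F μ w z‖ ^ 2) (uniformSphere d) :=
    cont_integrable _ (((gFun_cont hF.continuous).norm).pow 2)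
  have hint2 : Integrable (fun z : Metric.sphere (0 : Euc d) 1 =>
      2 * (d : ℝ) ^ 2 * ⟪G, (z : Euc d)⟫ ^ 2 + 2 * (L * d * μ) ^ 2) (uniformSphere d) :=
    cont_integrable _ ((continuous_const.mul ((cont_inner G).pow 2)).add continuous_const)
  calc ∫ z, ‖gFun d F μ w z‖ ^ 2 ∂(uniformSphere d)
      ≤ ∫ z : Metric.sphere (0 : Euc d) 1,
          (2 * (d : ℝ) ^ 2 * ⟪G, (z : Euc d)⟫ ^ 2 + 2 * (L * d * μ) ^ 2) ∂(uniformSphere d) :=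
        integral_mono hint1 hint2 hptwise
    _ = 2 * (d : ℝ) ^ 2 * (‖G‖ ^ 2 / d) + 2 * (L * d * μ) ^ 2 := by
        rw [integral_add (cont_integrable (fun z : Metric.sphere (0 : Euc d) 1 => 2 * (d : ℝ) ^ 2 * ⟪G, (z : Euc d)⟫ ^ 2) (continuous_const.mul ((cont_inner G).pow 2)))
          (integrable_const _), MeasureTheory.integral_const_mul, integral_inner_sq hd,
          integral_const]
        simp
    _ ≤ 2 * d * ‖G‖ ^ 2 + 2 * L ^ 2 * d ^ 2 * μ ^ 2 := by
        have : 2 * (d : ℝ) ^ 2 * (‖G‖ ^ 2 / d) = 2 * d * ‖G‖ ^ 2 := by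
          field_simp
        rw [this]
        nlinarith []
end single

section mean
variable {d : ℕ} {F : Euc d → ℝ} {L μ : ℝ} {w : Euc d}

lemma mean_bound (hd : 0 < d) (hμ : 0 < μ) (hL : 0 ≤ L) (hF : Differentiable ℝ F)
    (hsmooth : ∀ x y : Euc d, ‖gradient F x - gradient F y‖ ≤ L * ‖x - y‖) :
    ‖(∫ z, gFun d F μ w z ∂(uniformSphere d)) - gradient F w‖ ≤ L * d * μ := by
  haveI := uniformSphere_prob d hd
  set G := gradient F w with hG
  have hcontA : Continuous (fun z : Metric.sphere (0 : Euc d) 1 =>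
      ((d : ℝ) * ⟪G, (z : Euc d)⟫) • (z : Euc d)) :=
    (continuous_const.mul (cont_inner G)).smul continuous_subtype_val
  have hcontE : Continuous (fun z : Metric.sphere (0 : Euc d) 1 =>
      (aFun d F μ w (z : Euc d) - (d : ℝ) * ⟪G, (z : Euc d)⟫) • (z : Euc d)) := by
    refine Continuous.smul (f := fun z : Metric.sphere (0 : Euc d) 1 => aFun d F μ w (z : Euc d) - (d : ℝ) * ⟪G, (z : Euc d)⟫) ?_ continuous_subtype_val
    apply Continuous.sub _ (continuous_const.mul (cont_inner G))
    have := gFun_cont (d := d) (μ := μ) (w := w) hF.continuous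
    -- extract scalar continuity directly
    apply Continuous.div_const
    apply Continuous.mul continuous_const
    exact (hF.continuous.comp (continuous_const.add
        ((continuous_const : Continuous fun _ : Metric.sphere (0 : Euc d) 1 => μ).smul continuous_subtype_val))).sub
      (hF.continuous.comp (continuous_const.sub ((continuous_const : Continuous fun _ : Metric.sphere (0 : Euc d) 1 => μ).smul continuous_subtype_val)))
  have hsplit : (fun z : Metric.sphere (0 : Euc d) 1 => gFun d F μ w z)
      = fun z : Metric.sphere (0 : Euc d) 1 =>
        ((d : ℝ) * ⟪G, (z : Euc d)⟫) • (z : Euc d)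
          + (aFun d F μ w (z : Euc d) - (d : ℝ) * ⟪G, (z : Euc d)⟫) • (z : Euc d) := by
    funext z
    rw [gFun, ← add_smul]
    ring_nf
  rw [hsplit, integral_add (cont_integrable _ hcontA) (cont_integrable _ hcontE)]
  have hfirst : (∫ z, ((d : ℝ) * ⟪G, (z : Euc d)⟫) • (z : Euc d) ∂(uniformSphere d)) = G := by
    have : (fun z : Metric.sphere (0 : Euc d) 1 => ((d : ℝ) * ⟪G, (z : Euc d)⟫) • (z : Euc d))
        = fun z : Metric.sphere (0 : Euc d) 1 => (d : ℝ) • (⟪G, (z : Euc d)⟫ • (z : Euc d)) := by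
      funext z; rw [smul_smul]
    rw [this, integral_smul, integral_inner_smul hd, smul_smul]
    rw [mul_inv_cancel₀ (by exact_mod_cast hd.ne' : (d:ℝ) ≠ 0), one_smul]
  rw [hfirst, add_sub_cancel_left]
  calc ‖∫ z, (aFun d F μ w (z : Euc d) - (d : ℝ) * ⟪G, (z : Euc d)⟫) • (z : Euc d)
        ∂(uniformSphere d)‖
      ≤ ∫ z, ‖(aFun d F μ w (z : Euc d) - (d : ℝ) * ⟪G, (z : Euc d)⟫) • (z : Euc d)‖
        ∂(uniformSphere d) := norm_integral_le_integral_norm _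
    _ ≤ ∫ (_ : Metric.sphere (0 : Euc d) 1), (L * d * μ) ∂(uniformSphere d) := by
        apply integral_mono (cont_integrable _ hcontE.norm) (integrable_const _)
        intro z
        show ‖_‖ ≤ _
        rw [norm_smul, coe_sphere_norm, mul_one, Real.norm_eq_abs]
        exact aFun_bound hμ hL hF hsmooth (z : Euc d) (coe_sphere_norm z)
    _ = L * d * μ := by rw [integral_const]; simp

lemma cross_bound (hd : 0 < d) (hμ : 0 < μ) (hL : 0 ≤ L) (hF : Differentiable ℝ F)
    (hsmooth : ∀ x y : Euc d, ‖gradient F x - gradient F y‖ ≤ L * ‖x - y‖) :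
    ‖∫ z, gFun d F μ w z ∂(uniformSphere d)‖ ^ 2
      ≤ (1 + Real.sqrt d) * ‖gradient F w‖ ^ 2 + 2 * L ^ 2 * μ ^ 2 * d ^ 2 := by
  set G := gradient F w with hG
  set I := ∫ z, gFun d F μ w z ∂(uniformSphere d) with hI
  have h1 : ‖I‖ ≤ ‖G‖ + L * d * μ := by
    calc ‖I‖ = ‖(I - G) + G‖ := by rw [sub_add_cancel]
      _ ≤ ‖I - G‖ + ‖G‖ := norm_add_le _ _
      _ ≤ L * d * μ + ‖G‖ := by have := mean_bound (w := w) hd hμ hL hF hsmooth; linarith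
      _ = ‖G‖ + L * d * μ := by ring
  have hs : 1 ≤ Real.sqrt d := by
    rw [show (1:ℝ) = Real.sqrt 1 from (Real.sqrt_one).symm]
    exact Real.sqrt_le_sqrt (by exact_mod_cast hd)
  have hs2 : Real.sqrt d ^ 2 = d := Real.sq_sqrt (Nat.cast_nonneg d)
  have hBnn : 0 ≤ L * d * μ := by positivity
  have hInn : 0 ≤ ‖I‖ := norm_nonneg _
  have h2 : ‖I‖ ^ 2 ≤ (‖G‖ + L * d * μ) ^ 2 := by
    apply sq_le_sq' _ h1
    linarith
  calc ‖I‖ ^ 2 ≤ (‖G‖ + L * d * μ) ^ 2 := h2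
    _ ≤ (1 + Real.sqrt d) * ‖G‖ ^ 2 + 2 * (L * d * μ) ^ 2 := by
        nlinarith [sq_nonneg (‖G‖ - L * d * μ), sq_nonneg (Real.sqrt d * ‖G‖ - L * d * μ),
          norm_nonneg G, hBnn, hs, sq_nonneg (‖G‖ + L * d * μ)]
    _ = (1 + Real.sqrt d) * ‖G‖ ^ 2 + 2 * L ^ 2 * μ ^ 2 * d ^ 2 := by ring
end mean

section prodmeas
variable {X : Type*} [MeasurableSpace X] (ν : Measure X) [IsProbabilityMeasure ν]
variable {k : ℕ}

lemma pi_map_eval (r : Fin k) :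
    (Measure.pi fun _ : Fin k => ν).map (fun z => z r) = ν := by
  ext A hA
  rw [Measure.map_apply (measurable_pi_apply r) hA]
  have hpre : (fun z : Fin k → X => z r) ⁻¹' A
      = Set.pi univ (Function.update (fun _ : Fin k => (univ : Set X)) r A) := by
    ext z
    simp only [Set.mem_preimage, Set.mem_pi, Set.mem_univ, true_implies]
    constructor
    · intro h i
      by_cases hi : i = r
      · subst hi; simpa [Function.update] using h
      · simp [Function.update, hi]
    · intro h
      have := h r
      simpa [Function.update] using this
  rw [hpre, Measure.pi_pi]
  rw [← Finset.prod_erase_mul _ _ (Finset.mem_univ r)]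
  have h1 : ∀ i ∈ Finset.univ.erase r,
      ν (Function.update (fun _ : Fin k => (univ : Set X)) r A i) = 1 := by
    intro i hi
    rw [Function.update_of_ne (Finset.mem_erase.mp hi).1]
    exact measure_univ
  rw [Finset.prod_congr rfl h1, Finset.prod_const_one, one_mul, Function.update_self]

lemma pi_map_pair {r s : Fin k} (hrs : r ≠ s) :
    (Measure.pi fun _ : Fin k => ν).map (fun z => (z r, z s)) = ν.prod ν := by
  refine ((Measure.prod_eq ?_).symm)
  intro A B hA hB
  rw [Measure.map_apply ((measurable_pi_apply r).prodMk (measurable_pi_apply s))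
    (hA.prod hB)]
  classical
  set t : Fin k → Set X := fun i => if i = r then A else if i = s then B else univ with ht
  have hpre : (fun z : Fin k → X => (z r, z s)) ⁻¹' (A ×ˢ B) = Set.pi univ t := by
    ext z
    simp only [Set.mem_preimage, Set.mem_prod, Set.mem_pi, Set.mem_univ, true_implies, ht]
    constructor
    · rintro ⟨h1, h2⟩ i
      by_cases hir : i = r
      · subst hir; simp [h1]
      · by_cases his : i = s
        · subst his; simp [hir, h2]
        · simp [hir, his]
    · intro h
      refine ⟨?_, ?_⟩
      · have := h r; simpa using this
      · have := h s; simpa [Ne.symm hrs] using this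
  rw [hpre, Measure.pi_pi]
  rw [← Finset.prod_erase_mul _ _ (Finset.mem_univ r)]
  have hs' : s ∈ Finset.univ.erase r := Finset.mem_erase.mpr ⟨Ne.symm hrs, Finset.mem_univ s⟩
  rw [← Finset.prod_erase_mul _ _ hs']
  have h1 : ∀ i ∈ (Finset.univ.erase r).erase s, ν (t i) = 1 := by
    intro i hi
    have hir := (Finset.mem_erase.mp (Finset.mem_erase.mp hi).2).1
    have his := (Finset.mem_erase.mp hi).1
    simp only [ht, if_neg hir, if_neg his]
    exact measure_univ
  rw [Finset.prod_congr rfl h1, Finset.prod_const_one, one_mul]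
  have htr : t r = A := by simp [ht]
  have hts : t s = B := by simp [ht, Ne.symm hrs]
  rw [htr, hts, mul_comm]
end prodmeas

lemma cont_integrable' {α E : Type*} [MeasurableSpace α] [TopologicalSpace α] [CompactSpace α]
    [OpensMeasurableSpace α] [T2Space α] [NormedAddCommGroup E]
    (μ : Measure α) [IsFiniteMeasure μ] (f : α → E) (hf : Continuous f) : Integrable f μ := by
  have := hf.continuousOn.integrableOn_compact (μ := μ) isCompact_univ
  rwa [integrableOn_univ] at this

section combine
variable {d k : ℕ} {F : Euc d → ℝ} {L μ : ℝ} {w : Euc d}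

lemma diag_term (hd : 0 < d) (hFc : Continuous F) (r : Fin k) :
    ∫ z : Fin k → Metric.sphere (0 : Euc d) 1, ‖gFun d F μ w (z r)‖ ^ 2
      ∂(Measure.pi fun _ : Fin k => uniformSphere d)
    = ∫ z, ‖gFun d F μ w z‖ ^ 2 ∂(uniformSphere d) := by
  haveI := uniformSphere_prob d hd
  conv_rhs => rw [← pi_map_eval (uniformSphere d) r]
  rw [integral_map (measurable_pi_apply r).aemeasurable
    (((gFun_cont hFc).norm.pow 2).aestronglyMeasurable)]

lemma cross_term (hd : 0 < d) (hFc : Continuous F) {r s : Fin k} (hrs : r ≠ s) :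
    ∫ z : Fin k → Metric.sphere (0 : Euc d) 1, ⟪gFun d F μ w (z r), gFun d F μ w (z s)⟫
      ∂(Measure.pi fun _ : Fin k => uniformSphere d)
    = ‖∫ z, gFun d F μ w z ∂(uniformSphere d)‖ ^ 2 := by
  haveI := uniformSphere_prob d hd
  have hmap := pi_map_pair (uniformSphere d) (k := k) hrs
  have hcont2 : Continuous (fun p : Metric.sphere (0 : Euc d) 1 × Metric.sphere (0 : Euc d) 1 =>
      ⟪gFun d F μ w p.1, gFun d F μ w p.2⟫) :=
    ((gFun_cont hFc).comp continuous_fst).inner ((gFun_cont hFc).comp continuous_snd)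
  have step1 : ∫ z : Fin k → Metric.sphere (0 : Euc d) 1,
      ⟪gFun d F μ w (z r), gFun d F μ w (z s)⟫
      ∂(Measure.pi fun _ : Fin k => uniformSphere d)
      = ∫ p, ⟪gFun d F μ w p.1, gFun d F μ w p.2⟫
          ∂((uniformSphere d).prod (uniformSphere d)) := by
    rw [← hmap, integral_map ((measurable_pi_apply r).prodMk (measurable_pi_apply s)).aemeasurable
      hcont2.aestronglyMeasurable]
  rw [step1]
  have hintg : Integrable (gFun d F μ w) (uniformSphere d) :=
    cont_integrable _ (gFun_cont hFc)
  rw [MeasureTheory.integral_prod _ (cont_integrable' _ _ hcont2)]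
  have hinner : ∀ x : Metric.sphere (0 : Euc d) 1,
      ∫ y, ⟪gFun d F μ w x, gFun d F μ w y⟫ ∂(uniformSphere d)
      = ⟪gFun d F μ w x, ∫ y, gFun d F μ w y ∂(uniformSphere d)⟫ := fun x =>
    integral_inner hintg (gFun d F μ w x)
  rw [show (fun x : Metric.sphere (0 : Euc d) 1 =>
      ∫ y, ⟪gFun d F μ w x, gFun d F μ w y⟫ ∂(uniformSphere d))
      = fun x : Metric.sphere (0 : Euc d) 1 =>
        ⟪gFun d F μ w x, ∫ y, gFun d F μ w y ∂(uniformSphere d)⟫ from funext hinner]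
  set c := ∫ y, gFun d F μ w y ∂(uniformSphere d) with hc
  have hswap : (fun x : Metric.sphere (0 : Euc d) 1 => ⟪gFun d F μ w x, c⟫)
      = fun x : Metric.sphere (0 : Euc d) 1 => ⟪c, gFun d F μ w x⟫ := by
    funext x; exact real_inner_comm _ _
  rw [hswap, integral_inner hintg c, real_inner_self_eq_norm_sq]
end combine


/-- Second moment of the averaged zero-order estimate with `μ > 0` over `k` i.i.d. directions:
`E‖(1/k) ∑ᵣ g(w,zᵣ)‖² ≤ ((k-1)(1+√d) + 2d)/k · ‖∇F(w)‖² + 2L²μ²d²`. -/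
theorem stmt14 (d k : ℕ) (hd : 0 < d) (hk : 0 < k) (F : Euc d → ℝ) (L μ : ℝ)
    (hμ : 0 < μ) (hL : 0 < L) (hF : Differentiable ℝ F)
    (hsmooth : ∀ x y : Euc d, ‖gradient F x - gradient F y‖ ≤ L * ‖x - y‖) (w : Euc d) :
    ∫ z : Fin k → Metric.sphere (0 : Euc d) 1,
        ‖(k : ℝ)⁻¹ • ∑ r : Fin k,
            ((d : ℝ) * (F (w + μ • (z r : Euc d)) - F (w - μ • (z r : Euc d))) / (2 * μ)) •
              (z r : Euc d)‖ ^ 2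
        ∂(Measure.pi fun _ : Fin k => uniformSphere d)
      ≤ (((k : ℝ) - 1) * (1 + Real.sqrt d) + 2 * d) / k * ‖gradient F w‖ ^ 2
        + 2 * L ^ 2 * μ ^ 2 * (d : ℝ) ^ 2 := by
  haveI := uniformSphere_prob d hd
  set σ := uniformSphere d with hσ
  set π := (Measure.pi fun _ : Fin k => uniformSphere d) with hπ
  set g := gFun d F μ w with hg
  set G := gradient F w with hG
  -- rewrite integrand
  have hshow : ∀ z : Fin k → Metric.sphere (0 : Euc d) 1,
      ‖(k : ℝ)⁻¹ • ∑ r : Fin k,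
          ((d : ℝ) * (F (w + μ • (z r : Euc d)) - F (w - μ • (z r : Euc d))) / (2 * μ)) •
            (z r : Euc d)‖ ^ 2
      = (k : ℝ)⁻¹ ^ 2 * ∑ r : Fin k, ∑ s : Fin k, ⟪g (z r), g (z s)⟫ := by
    intro z
    have h1 : (∑ r : Fin k,
        ((d : ℝ) * (F (w + μ • (z r : Euc d)) - F (w - μ • (z r : Euc d))) / (2 * μ)) •
          (z r : Euc d)) = ∑ r : Fin k, g (z r) := rfl
    rw [h1, norm_smul, mul_pow, Real.norm_eq_abs, sq_abs]
    congr 1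
    rw [← real_inner_self_eq_norm_sq, sum_inner]
    exact Finset.sum_congr rfl fun r _ => inner_sum _ _ _
  rw [show (fun z : Fin k → Metric.sphere (0 : Euc d) 1 =>
      ‖(k : ℝ)⁻¹ • ∑ r : Fin k,
          ((d : ℝ) * (F (w + μ • (z r : Euc d)) - F (w - μ • (z r : Euc d))) / (2 * μ)) •
            (z r : Euc d)‖ ^ 2)
      = fun z : Fin k → Metric.sphere (0 : Euc d) 1 =>
        (k : ℝ)⁻¹ ^ 2 * ∑ r : Fin k, ∑ s : Fin k, ⟪g (z r), g (z s)⟫ from funext hshow]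
  have hcontrs : ∀ r s : Fin k, Continuous (fun z : Fin k → Metric.sphere (0 : Euc d) 1 =>
      ⟪g (z r), g (z s)⟫) := fun r s =>
    ((gFun_cont hF.continuous).comp (continuous_apply r)).inner
      ((gFun_cont hF.continuous).comp (continuous_apply s))
  rw [MeasureTheory.integral_const_mul,
    integral_finset_sum _ (fun r _ => cont_integrable' _ _
      (continuous_finset_sum _ (fun s _ => hcontrs r s)))]
  have hsums : ∀ r : Fin k, ∫ z : Fin k → Metric.sphere (0 : Euc d) 1,
      (∑ s : Fin k, ⟪g (z r), g (z s)⟫) ∂π = ∑ s : Fin k, ∫ z, ⟪g (z r), g (z s)⟫ ∂π :=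
    fun r => integral_finset_sum _ (fun s _ => cont_integrable' _ _ (hcontrs r s))
  rw [Finset.sum_congr rfl (fun r _ => hsums r)]
  -- bound each term
  set D : ℝ := 2 * d * ‖G‖ ^ 2 + 2 * L ^ 2 * d ^ 2 * μ ^ 2 with hD
  set C : ℝ := (1 + Real.sqrt d) * ‖G‖ ^ 2 + 2 * L ^ 2 * μ ^ 2 * d ^ 2 with hC
  have hterm : ∀ r s : Fin k, ∫ z, ⟪g (z r), g (z s)⟫ ∂π ≤ if r = s then D else C := by
    intro r s
    by_cases hrs : r = s
    · subst hrs
      rw [if_pos rfl]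
      have heq : ∫ z, ⟪g (z r), g (z r)⟫ ∂π = ∫ z : Fin k → Metric.sphere (0 : Euc d) 1,
          ‖g (z r)‖ ^ 2 ∂π := by
        apply integral_congr_ae
        filter_upwards with z
        rw [real_inner_self_eq_norm_sq]
      rw [heq, diag_term hd hF.continuous r]
      exact diag_bound hd hμ hL.le hF hsmooth
    · rw [if_neg hrs, cross_term hd hF.continuous hrs]
      exact cross_bound hd hμ hL.le hF hsmooth
  have hsum_bound : ∑ r : Fin k, ∑ s : Fin k, ∫ z, ⟪g (z r), g (z s)⟫ ∂π
      ≤ (k : ℝ) * (D + ((k : ℝ) - 1) * C) := by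
    calc ∑ r : Fin k, ∑ s : Fin k, ∫ z, ⟪g (z r), g (z s)⟫ ∂π
        ≤ ∑ r : Fin k, ∑ s : Fin k, (if r = s then D else C) :=
          Finset.sum_le_sum fun r _ => Finset.sum_le_sum fun s _ => hterm r s
      _ = (k : ℝ) * (D + ((k : ℝ) - 1) * C) := by
          have hrow : ∀ r : Fin k, ∑ s : Fin k, (if r = s then D else C)
              = D + ((k : ℝ) - 1) * C := by
            intro r
            have h2 : ∀ s : Fin k, (if r = s then D else C)
                = C + (if r = s then D - C else 0) := by
              intro s; by_cases h : r = s <;> simp [h]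
            rw [Finset.sum_congr rfl (fun s _ => h2 s), Finset.sum_add_distrib,
              Finset.sum_const, Finset.sum_ite_eq, if_pos (Finset.mem_univ r)]
            simp only [Finset.card_univ, Fintype.card_fin, nsmul_eq_mul]
            ring
          rw [Finset.sum_congr rfl (fun r _ => hrow r), Finset.sum_const]
          simp only [Finset.card_univ, Fintype.card_fin, nsmul_eq_mul]
  have hk0 : (k : ℝ) ≠ 0 := by exact_mod_cast hk.ne'
  calc (k : ℝ)⁻¹ ^ 2 * ∑ r : Fin k, ∑ s : Fin k, ∫ z, ⟪g (z r), g (z s)⟫ ∂π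
      ≤ (k : ℝ)⁻¹ ^ 2 * ((k : ℝ) * (D + ((k : ℝ) - 1) * C)) := by
        apply mul_le_mul_of_nonneg_left hsum_bound
        positivity
    _ = (((k : ℝ) - 1) * (1 + Real.sqrt d) + 2 * d) / k * ‖G‖ ^ 2
        + 2 * L ^ 2 * μ ^ 2 * (d : ℝ) ^ 2 := by
        rw [hD, hC]
        field_simp
        ring
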